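/- Every open subspace U of a sequentially Ascoli Tychonoff space X is a sequentially Ascoli space (with the subspace topology). -/

import Mathlib

open Set Filter Topology

/-- A set `H` of continuous real-valued functions is equicontinuous. -/
def EquicontinuousSet {X : Type*} [TopologicalSpace X] (H : Set C(X, ℝ)) : Prop :=
  ∀ x : X, ∀ ε : ℝ, 0 < ε → ∃ U ∈ 𝓝 x, ∀ x' ∈ U, ∀ f ∈ H, |f x' - f x| < ε

/-- `X` is Ascoli: every compact subset of `C_k(X)` is equicontinuous. -/
def AscoliSpace (X : Type*) [TopologicalSpace X] : Prop :=
  ∀ K : Set C(X, ℝ), IsCompact K → EquicontinuousSet K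

/-- `X` is sequentially Ascoli: every convergent sequence in `C_k(X)` is equicontinuous. -/
def SeqAscoliSpace (X : Type*) [TopologicalSpace X] : Prop :=
  ∀ (f : ℕ → C(X, ℝ)) (g : C(X, ℝ)), Tendsto f atTop (𝓝 g) →
    EquicontinuousSet (Set.range f ∪ {g})

/-- A function is `k`-continuous if its restriction to every compact subset is continuous. -/
def KContinuous {X Y : Type*} [TopologicalSpace X] [TopologicalSpace Y] (f : X → Y) : Prop :=
  ∀ K : Set X, IsCompact K → ContinuousOn f K

/-- `X` is a `k_ℝ`-space if every `k`-continuous real-valued function is continuous. -/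
def KRSpace (X : Type*) [TopologicalSpace X] : Prop :=
  ∀ f : X → ℝ, KContinuous f → Continuous f

/-- `X` is an `s_ℝ`-space if every sequentially continuous real-valued function is continuous. -/
def SRSpace (X : Type*) [TopologicalSpace X] : Prop :=
  ∀ f : X → ℝ, SeqContinuous f → Continuous f

/-- A function on a product is separately continuous. -/
def SeparatelyContinuous {X K : Type*} [TopologicalSpace X] [TopologicalSpace K]
    (Φ : X × K → ℝ) : Prop :=
  (∀ x : X, Continuous fun k => Φ (x, k)) ∧ (∀ k : K, Continuous fun x => Φ (x, k))

/-- `X` is pseudocompact: every continuous real-valued function on `X` is bounded. -/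
def Pseudocompact (X : Type*) [TopologicalSpace X] : Prop :=
  ∀ f : X → ℝ, Continuous f → ∃ M : ℝ, ∀ x : X, |f x| ≤ M

/-- A subset `A` of `X` is functionally bounded if every continuous real-valued
function on `X` is bounded on `A`. -/
def FunctionallyBounded {X : Type*} [TopologicalSpace X] (A : Set X) : Prop :=
  ∀ f : X → ℝ, Continuous f → ∃ M : ℝ, ∀ a ∈ A, |f a| ≤ M

/-- An `R`-quotient map: a continuous surjection such that real-valued functions on the
codomain are continuous as soon as their composition with the map is continuous. -/
def RQuotientMap {X Y : Type*} [TopologicalSpace X] [TopologicalSpace Y] (p : X → Y) : Prop :=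
  Continuous p ∧ Function.Surjective p ∧ ∀ φ : Y → ℝ, Continuous (φ ∘ p) → Continuous φ

/-- Auxiliary piecewise-linear bump profile. -/
noncomputable def psiAux (t : ℝ) : ℝ := max 0 (min 1 (3 * t - 1))

lemma psiAux_continuous : Continuous psiAux :=
  continuous_const.max (continuous_const.min (by fun_prop))

lemma psiAux_eq_zero {t : ℝ} (ht : t < 1/3) : psiAux t = 0 := by
  have : min 1 (3 * t - 1) ≤ 0 := le_trans (min_le_right _ _) (by linarith)
  simp [psiAux, max_eq_left this]

lemma psiAux_eq_one {t : ℝ} (ht : 2/3 < t) : psiAux t = 1 := by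
  have h1 : (1:ℝ) ≤ 3 * t - 1 := by linarith
  simp [psiAux, min_eq_left h1]

lemma psiAux_nonneg (t : ℝ) : 0 ≤ psiAux t := le_max_left _ _

lemma psiAux_le_one (t : ℝ) : psiAux t ≤ 1 := by
  simp only [psiAux, max_le_iff]
  exact ⟨zero_le_one, min_le_left _ _⟩

open Classical in
/-- Extension of `χ · h` by zero outside `U`. -/
noncomputable def extAux {X : Type*} [TopologicalSpace X] (U : Set X) (χ : X → ℝ)
    (h : C(U, ℝ)) : X → ℝ :=
  fun y => if hy : y ∈ U then χ y * h ⟨y, hy⟩ else 0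

lemma extAux_of_mem {X : Type*} [TopologicalSpace X] {U : Set X} (χ : X → ℝ)
    (h : C(U, ℝ)) {y : X} (hy : y ∈ U) : extAux U χ h y = χ y * h ⟨y, hy⟩ := by
  simp [extAux, hy]

lemma extAux_of_not_mem {X : Type*} [TopologicalSpace X] {U : Set X} (χ : X → ℝ)
    (h : C(U, ℝ)) {y : X} (hy : y ∉ U) : extAux U χ h y = 0 := by
  simp [extAux, hy]

theorem seqAscoli_of_isOpen_subspace {X : Type*} [TopologicalSpace X] [T35Space X]
    (hX : SeqAscoliSpace X) (U : Set X) (hU : IsOpen U) : SeqAscoliSpace ↥U := by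
  classical
  intro f g hfg x ε hε
  -- a Urysohn-type function φ : X → ℝ with φ x = 1, φ = 0 off U, φ ≤ 1
  obtain ⟨φ₀, hφ₀c, hφ₀x, hφ₀U⟩ :=
    CompletelyRegularSpace.completely_regular (X := X) x.1 Uᶜ hU.isClosed_compl
      (by simp [x.2])
  obtain ⟨φ, hφc, hφx, hφ0, hφle⟩ : ∃ φ : X → ℝ, Continuous φ ∧ φ x.1 = 1 ∧
      (∀ y ∉ U, φ y = 0) ∧ ∀ y, φ y ≤ 1 := by
    refine ⟨fun y => 1 - (φ₀ y : ℝ), continuous_const.sub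
      (continuous_subtype_val.comp hφ₀c), by simp [hφ₀x], ?_, ?_⟩
    · intro y hy
      have := hφ₀U (Set.mem_compl hy)
      simp [show φ₀ y = 1 from this]
    · intro y
      have := (φ₀ y).2.1
      simp only [sub_le_self_iff]
      exact this
  -- the bump function χ
  set χ : X → ℝ := fun y => psiAux (φ y) with hχdef
  have hχc : Continuous χ := psiAux_continuous.comp hφc
  have hχ0 : ∀ y, φ y < 1/3 → χ y = 0 := fun y hy => psiAux_eq_zero hy
  have hχ1 : ∀ y, 2/3 < φ y → χ y = 1 := fun y hy => psiAux_eq_one hy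
  -- the extension operator is continuous
  have hext : ∀ h : C(U, ℝ), Continuous (extAux U χ h) := by
    intro h
    rw [continuous_iff_continuousAt]
    intro y
    rcases lt_or_ge (φ y) (1/3) with hy | hy
    · have hmem : {z | φ z < 1/3} ∈ 𝓝 y := (isOpen_lt hφc continuous_const).mem_nhds hy
      have heq : extAux U χ h =ᶠ[𝓝 y] (fun _ => (0:ℝ)) := by
        filter_upwards [hmem] with z hz
        by_cases hzU : z ∈ U
        · rw [extAux_of_mem χ h hzU, hχ0 z hz, zero_mul]
        · exact extAux_of_not_mem χ h hzU
      exact continuousAt_const.congr heq.symm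
    · have hyU : y ∈ U := by
        by_contra hyU
        rw [hφ0 y hyU] at hy; norm_num at hy
      have hres : ContinuousOn (extAux U χ h) U := by
        rw [continuousOn_iff_continuous_restrict]
        have : U.domRestrict (extAux U χ h) = fun z : U => χ z.1 * h z := by
          funext z
          exact extAux_of_mem χ h z.2
        rw [this]
        exact (hχc.comp continuous_subtype_val).mul h.continuous
      exact hres.continuousAt (hU.mem_nhds hyU)
  set F : ℕ → C(X, ℝ) := fun n => ⟨extAux U χ (f n), hext (f n)⟩ with hF
  set G : C(X, ℝ) := ⟨extAux U χ g, hext g⟩ with hG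
  -- convergence F → G in C_k(X)
  have hFG : Tendsto F atTop (𝓝 G) := by
    rw [ContinuousMap.tendsto_iff_forall_isCompact_tendstoUniformlyOn]
    intro K hK
    rw [Metric.tendstoUniformlyOn_iff]
    intro δ hδ
    have hS : IsClosed {z : X | 1/3 ≤ φ z} := isClosed_le continuous_const hφc
    set K' : Set X := K ∩ {z : X | 1/3 ≤ φ z} with hK'
    have hK'c : IsCompact K' := hK.inter_right hS
    have hK'U : K' ⊆ U := by
      intro z hz
      by_contra hzU
      have h1 : φ z = 0 := hφ0 z hzU
      have h2 : 1/3 ≤ φ z := hz.2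
      rw [h1] at h2
      norm_num at h2
    have hK'' : IsCompact ((Subtype.val : U → X) ⁻¹' K') := by
      rw [Topology.IsEmbedding.subtypeVal.isCompact_iff]
      have : (Subtype.val : U → X) '' (Subtype.val ⁻¹' K') = K' := by
        rw [Subtype.image_preimage_coe, Set.inter_comm]
        exact Set.inter_eq_left.mpr hK'U
      rw [this]; exact hK'c
    have huf := (ContinuousMap.tendsto_iff_forall_isCompact_tendstoUniformlyOn.mp hfg) _ hK''
    rw [Metric.tendstoUniformlyOn_iff] at huf
    filter_upwards [huf δ hδ] with n hn
    intro y hy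
    by_cases hyS : 1/3 ≤ φ y
    · have hyU : y ∈ U := hK'U ⟨hy, hyS⟩
      have hmem : (⟨y, hyU⟩ : U) ∈ (Subtype.val : U → X) ⁻¹' K' := ⟨hy, hyS⟩
      have hd := hn ⟨y, hyU⟩ hmem
      have e1 : G y = χ y * g ⟨y, hyU⟩ := extAux_of_mem χ g hyU
      have e2 : F n y = χ y * f n ⟨y, hyU⟩ := extAux_of_mem χ (f n) hyU
      rw [e1, e2, Real.dist_eq, ← mul_sub, abs_mul, abs_of_nonneg (psiAux_nonneg _)]
      rw [Real.dist_eq] at hd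
      calc χ y * |g ⟨y, hyU⟩ - f n ⟨y, hyU⟩| ≤ 1 * |g ⟨y, hyU⟩ - f n ⟨y, hyU⟩| :=
            mul_le_mul_of_nonneg_right (psiAux_le_one _) (abs_nonneg _)
        _ = |g ⟨y, hyU⟩ - f n ⟨y, hyU⟩| := one_mul _
        _ < δ := hd
    · push_neg at hyS
      have hχy : χ y = 0 := hχ0 y hyS
      have h1 : G y = 0 := by
        by_cases hyU : y ∈ U
        · rw [show G y = χ y * g ⟨y, hyU⟩ from extAux_of_mem χ g hyU, hχy, zero_mul]
        · exact extAux_of_not_mem χ g hyU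
      have h2 : F n y = 0 := by
        by_cases hyU : y ∈ U
        · rw [show F n y = χ y * f n ⟨y, hyU⟩ from extAux_of_mem χ (f n) hyU, hχy, zero_mul]
        · exact extAux_of_not_mem χ (f n) hyU
      rw [h1, h2]
      simpa using hδ
  -- apply sequential Ascoli of X
  obtain ⟨V, hV, hVε⟩ := hX F G hFG x.1 ε hε
  have hW : V ∩ {z : X | 2/3 < φ z} ∈ 𝓝 (x.1) :=
    Filter.inter_mem hV ((isOpen_lt continuous_const hφc).mem_nhds (by
      simp only [Set.mem_setOf_eq, hφx]; norm_num))
  refine ⟨Subtype.val ⁻¹' (V ∩ {z : X | 2/3 < φ z}),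
    continuous_subtype_val.continuousAt.preimage_mem_nhds hW, ?_⟩
  intro x' hx' h hh
  have hχx : χ x.1 = 1 := hχ1 _ (by rw [hφx]; norm_num)
  have hχx' : χ x'.1 = 1 := hχ1 _ hx'.2
  have key : ∀ (H : C(X, ℝ)) (h : C(U, ℝ)), H ∈ Set.range F ∪ {G} →
      (∀ y : X, H y = extAux U χ h y) → |h x' - h x| < ε := by
    intro H h hH heq
    have h1 : H x'.1 = h x' := by
      rw [heq, extAux_of_mem χ h x'.2, hχx', one_mul]
    have h2 : H x.1 = h x := by
      rw [heq, extAux_of_mem χ h x.2, hχx, one_mul]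
    rw [← h1, ← h2]
    exact hVε x'.1 hx'.1 H hH
  rcases hh with ⟨n, rfl⟩ | rfl
  · exact key (F n) (f n) (Or.inl ⟨n, rfl⟩) (fun y => rfl)
  · exact key G h (Or.inr rfl) (fun y => rfl)
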